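/- For all integers r ≥ 0, ℓ ≥ 1, and q ≥ 0 the following holds. Let x = (x_e)_{e ∈ E_{ℓ,q}} and let x' = (x'_e)_{e ∈ E'_{ℓ,q}} agree with x on E_{ℓ,q} and have x'_e = 1 for every new edge e ∈ E'_{ℓ,q}∖E_{ℓ,q}. If x' ∈ N_+^r(ST(G'_{ℓ,q})), then x ∈ N_+^r(SP(G_{ℓ,q}, s, t)). -/

import Mathlib

open Finset

namespace TSPGap


/-! ### Lovász–Schrijver lift-and-project operators -/

/-- `cone(R) = {(λ, λx) : λ ≥ 0, x ∈ R}`, with the extra 0th coordinate first. -/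
def lsCone {ι : Type*} (R : Set (ι → ℝ)) : Set (ℝ × (ι → ℝ)) :=
  {p | ∃ c : ℝ, ∃ y ∈ R, 0 ≤ c ∧ p.1 = c ∧ p.2 = fun i => c * y i}

/-- `X` is a protection matrix witnessing `x ∈ N(R)`: it is symmetric, its 0th row and
diagonal both equal `(1, x)`, and each row `X_i` and difference `X_0 - X_i` lies in `cone(R)`. -/
def IsProtection {ι : Type*} (R : Set (ι → ℝ)) (x : ι → ℝ)
    (X : Option ι → Option ι → ℝ) : Prop :=
  (∀ i j, X i j = X j i) ∧
  X none none = 1 ∧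
  (∀ i, X none (some i) = x i) ∧
  (∀ i, X (some i) (some i) = x i) ∧
  (∀ i, (X (some i) none, fun j => X (some i) (some j)) ∈ lsCone R) ∧
  (∀ i, (X none none - X (some i) none,
         fun j => X none (some j) - X (some i) (some j)) ∈ lsCone R)

/-- The Lovász–Schrijver `N` operator. -/
def lsN {ι : Type*} (R : Set (ι → ℝ)) : Set (ι → ℝ) :=
  {x | ∃ X : Option ι → Option ι → ℝ, IsProtection R x X}

/-- The Lovász–Schrijver `N₊` operator (protection matrix additionally PSD). -/
def lsNplus {ι : Type*} [Fintype ι] (R : Set (ι → ℝ)) : Set (ι → ℝ) :=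
  {x | ∃ X : Matrix (Option ι) (Option ι) ℝ, X.PosSemidef ∧
        IsProtection R x (fun i j => X i j)}

/-! ### Directed graphs -/

variable {V : Type*} [DecidableEq V]

/-- The list of (directed) steps of a walk given by its list of vertices. -/
def dSteps (l : List V) : List (V × V) := l.zip l.tail

/-- The steps of a closed walk given by its list of vertices. -/
def cycSteps (l : List V) : List (V × V) := l.zip (l.rotate 1)

/-- `l` is a directed walk from `u` to `v` using edges of `E`. -/
def IsDWalk (E : Finset (V × V)) (u v : V) (l : List V) : Prop :=
  l.head? = some u ∧ l.getLast? = some v ∧ ∀ a ∈ dSteps l, a ∈ E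

/-- Total weight of a walk. -/
def dWalkWeight (w : V × V → ℝ) (l : List V) : ℝ := ((dSteps l).map w).sum

/-- Shortest-path distance from `u` to `v` in the weighted directed graph `(E, w)`. -/
noncomputable def dDist (E : Finset (V × V)) (w : V × V → ℝ) (u v : V) : ℝ :=
  sInf {c | ∃ l : List V, IsDWalk E u v l ∧ dWalkWeight w l = c}

/-- `x(δ⁺(S))`. -/
def outCut (E : Finset (V × V)) (x : ↥E → ℝ) (S : Finset V) : ℝ :=
  ∑ e ∈ E.attach.filter (fun e => e.val.1 ∈ S ∧ e.val.2 ∉ S), x e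

/-- `x(δ⁻(S))`. -/
def inCut (E : Finset (V × V)) (x : ↥E → ℝ) (S : Finset V) : ℝ :=
  ∑ e ∈ E.attach.filter (fun e => e.val.1 ∉ S ∧ e.val.2 ∈ S), x e

/-- `d · x = ∑_e d_e x_e` over the edge set `E`. -/
def dDot (E : Finset (V × V)) (d : V × V → ℝ) (x : ↥E → ℝ) : ℝ :=
  ∑ e ∈ E.attach, d e.val * x e

/-- The balanced asymmetric tour polytope of the directed graph with node set `VS`
and edge set `E`. -/
def ATbal (VS : Finset V) (E : Finset (V × V)) : Set (↥E → ℝ) :=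
  {x | (∀ e, 0 ≤ x e ∧ x e ≤ 1) ∧
       (∀ S : Finset V, S ⊆ VS → S.Nonempty → S ≠ VS →
          1 ≤ outCut E x S ∧ 1 ≤ inCut E x S) ∧
       (∀ v ∈ VS, outCut E x {v} = inCut E x {v})}

/-- Indicator vectors of Hamiltonian cycles (on node set `VS`) among edges `E`. -/
def hamCycleVecs (VS : Finset V) (E : Finset (V × V)) : Set (↥E → ℝ) :=
  {x | ∃ c : List V, 2 ≤ c.length ∧ c.Nodup ∧ c.toFinset = VS ∧
        (∀ a ∈ cycSteps c, a ∈ E) ∧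
        ∀ e : ↥E, x e = if e.val ∈ cycSteps c then 1 else 0}

/-- Edge set of the complete directed graph on the node set `VS` (no self-loops). -/
def dComplete (VS : Finset V) : Finset (V × V) := (VS ×ˢ VS).filter (fun e => e.1 ≠ e.2)

/-- Edge set of the complete directed graph on all of `V` (no self-loops). -/
def dCompleteAll (V : Type*) [Fintype V] [DecidableEq V] : Finset (V × V) :=
  Finset.univ.filter (fun e => e.1 ≠ e.2)

/-- Out-degree of `v` in edge set `E`. -/
def outDeg (E : Finset (V × V)) (v : V) : ℕ := (E.filter (fun e => e.1 = v)).card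

/-- In-degree of `v` in edge set `E`. -/
def inDeg (E : Finset (V × V)) (v : V) : ℕ := (E.filter (fun e => e.2 = v)).card

/-- A frame for the edge `e = (u,v)`: a set `F ⊆ E \ {e}` consisting of an edge-simple
path from `u` to `v` together with zero or more edge-simple cycles, all pairwise
edge-disjoint. -/
def IsFrame (E : Finset (V × V)) (e : V × V) (F : Finset (V × V)) : Prop :=
  F ⊆ E.erase e ∧
  ∃ (p : List V) (cs : List (List V)),
    p.head? = some e.1 ∧ p.getLast? = some e.2 ∧ (∀ a ∈ dSteps p, a ∈ E) ∧
    (∀ c ∈ cs, c ≠ [] ∧ ∀ a ∈ cycSteps c, a ∈ E) ∧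
    (dSteps p ++ (cs.map cycSteps).flatten).Nodup ∧
    F = (dSteps p ++ (cs.map cycSteps).flatten).toFinset

/-- There exist two edge-disjoint directed (simple) paths from `u` to `v` in `E`. -/
def TwoEdgeDisjointPaths (E : Finset (V × V)) (u v : V) : Prop :=
  ∃ p q : List V, p.Nodup ∧ q.Nodup ∧
    p.head? = some u ∧ p.getLast? = some v ∧
    q.head? = some u ∧ q.getLast? = some v ∧
    (∀ a ∈ dSteps p, a ∈ E) ∧ (∀ a ∈ dSteps q, a ∈ E) ∧
    (dSteps p).Disjoint (dSteps q)




/-! ### The Charikar–Goemans–Karloff graphs -/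

/-- Vertex type housing the graph `G_{k,r}` (index `k = 0` is a dummy level). -/
def CGKV : ℕ → Type
  | 0 => PUnit
  | 1 => ℕ
  | k + 2 => (ℕ × CGKV (k + 1)) ⊕ Fin 2

instance CGKV.decEq : (k : ℕ) → DecidableEq (CGKV k)
  | 0 => inferInstanceAs (DecidableEq PUnit)
  | 1 => inferInstanceAs (DecidableEq ℕ)
  | k + 2 =>
      letI : DecidableEq (CGKV (k + 1)) := CGKV.decEq (k + 1)
      inferInstanceAs (DecidableEq ((ℕ × CGKV (k + 1)) ⊕ Fin 2))

/-- The source of `G_{k,r}`. -/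
def CGKsrc (r : ℕ) : (k : ℕ) → CGKV k
  | 0 => PUnit.unit
  | 1 => (0 : ℕ)
  | _ + 2 => Sum.inr 0

/-- The sink of `G_{k,r}`. -/
def CGKsnk (r : ℕ) : (k : ℕ) → CGKV k
  | 0 => PUnit.unit
  | 1 => (r + 1 : ℕ)
  | _ + 2 => Sum.inr 1

/-- The node set of `G_{k,r}`. -/
def CGKVS (r : ℕ) : (k : ℕ) → Finset (CGKV k)
  | 0 => ∅
  | 1 => Finset.range (r + 2)
  | k + 2 =>
      ((Finset.range r) ×ˢ CGKVS r (k + 1)).image Sum.inl ∪ {Sum.inr 0, Sum.inr 1}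

/-- The edge set of `G_{k,r}`: at level 1, two oppositely-directed paths of `r+1` edges
on the nodes `0, …, r+1`; at level `k+2`, the edges of the `r` copies of `G_{k+1,r}`
together with a path from the source `s` through the copies' sources to the sink `t`,
and a path from `t` through the copies' sinks (in the opposite order) back to `s`. -/
def CGKE (r : ℕ) : (k : ℕ) → Finset (CGKV k × CGKV k)
  | 0 => ∅
  | 1 => (dSteps (List.range (r + 2))).toFinset ∪
         (dSteps (List.range (r + 2)).reverse).toFinset
  | k + 2 =>
      (Finset.range r).biUnion
        (fun j => (CGKE r (k + 1)).image (fun e => (Sum.inl (j, e.1), Sum.inl (j, e.2)))) ∪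
      (dSteps (Sum.inr 0 ::
        ((List.range r).map (fun j => Sum.inl (j, CGKsrc r (k + 1)))) ++ [Sum.inr 1])).toFinset ∪
      (dSteps (Sum.inr 1 ::
        (((List.range r).map (fun j => Sum.inl (j, CGKsnk r (k + 1)))).reverse) ++ [Sum.inr 0])).toFinset

/-- Edge weights of `G_{k,r}` (and of `L_{k,r}`): level-`ℓ` edges have weight `r^(ℓ-1)`. -/
def CGKw (r : ℕ) : (k : ℕ) → CGKV k × CGKV k → ℝ
  | 0, _ => 0
  | 1, _ => 1
  | k + 2, e =>
      match e with
      | (Sum.inl (j, u), Sum.inl (j', v)) =>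
          if j = j' then CGKw r (k + 1) (u, v) else (r : ℝ) ^ (k + 1)
      | _ => (r : ℝ) ^ (k + 1)

/-- `v₁`: the successor of `s` on the forward path of `G_{k,r}`. -/
def Lv1 (r : ℕ) : (k : ℕ) → CGKV k
  | 0 => PUnit.unit
  | 1 => (1 : ℕ)
  | k + 2 => Sum.inl (0, CGKsrc r (k + 1))

/-- `v₂`: the predecessor of `t` on the forward path of `G_{k,r}`. -/
def Lv2 (r : ℕ) : (k : ℕ) → CGKV k
  | 0 => PUnit.unit
  | 1 => (r : ℕ)
  | k + 2 => Sum.inl (r - 1, CGKsrc r (k + 1))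

/-- `v₃`: the successor of `t` on the backward path of `G_{k,r}`. -/
def Lv3 (r : ℕ) : (k : ℕ) → CGKV k
  | 0 => PUnit.unit
  | 1 => (r : ℕ)
  | k + 2 => Sum.inl (r - 1, CGKsnk r (k + 1))

/-- `v₄`: the predecessor of `s` on the backward path of `G_{k,r}`. -/
def Lv4 (r : ℕ) : (k : ℕ) → CGKV k
  | 0 => PUnit.unit
  | 1 => (1 : ℕ)
  | k + 2 => Sum.inl (0, CGKsnk r (k + 1))

/-- The node set `V_{k,r}` of `L_{k,r}`: the nodes of `G_{k,r}` minus the two terminals. -/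
def LVS (r k : ℕ) : Finset (CGKV k) :=
  ((CGKVS r k).erase (CGKsrc r k)).erase (CGKsnk r k)

/-- The edge set `E_{k,r}` of `L_{k,r}`: the edges of `G_{k,r}` not incident to a terminal,
plus the two new edges `(v₂,v₁)` and `(v₄,v₃)`. -/
def LE (r k : ℕ) : Finset (CGKV k × CGKV k) :=
  (CGKE r k).filter (fun e =>
    e.1 ≠ CGKsrc r k ∧ e.1 ≠ CGKsnk r k ∧ e.2 ≠ CGKsrc r k ∧ e.2 ≠ CGKsnk r k) ∪
  {(Lv2 r k, Lv1 r k), (Lv4 r k, Lv3 r k)}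



/-! ### Undirected graphs -/

variable {V : Type*} [DecidableEq V]

/-- The (undirected) steps of a walk given by its list of vertices. -/
def uSteps (l : List V) : List (Sym2 V) := (l.zip l.tail).map (Function.uncurry Sym2.mk)

/-- `l` is a walk from `u` to `v` in the undirected edge set `E`. -/
def IsUWalk (E : Finset (Sym2 V)) (u v : V) (l : List V) : Prop :=
  l.head? = some u ∧ l.getLast? = some v ∧ ∀ e ∈ uSteps l, e ∈ E

/-- Whether the undirected edge `e` crosses the cut `(S, S̄)`. -/
def uCrosses (S : Finset V) (e : Sym2 V) : Bool :=
  Sym2.lift ⟨fun a b => xor (decide (a ∈ S)) (decide (b ∈ S)),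
    fun a b => Bool.xor_comm _ _⟩ e

/-- `x(δ(S))`. -/
def uCut (E : Finset (Sym2 V)) (x : ↥E → ℝ) (S : Finset V) : ℝ :=
  ∑ e ∈ E.attach.filter (fun e => uCrosses S e.val), x e

/-- `d · x = ∑_e d_e x_e` over the undirected edge set `E`. -/
def uDot (E : Finset (Sym2 V)) (d : Sym2 V → ℝ) (x : ↥E → ℝ) : ℝ :=
  ∑ e ∈ E.attach, d e.val * x e

/-- The symmetric tour polytope of the undirected graph with node set `VS`, edges `E`. -/
def STpoly (VS : Finset V) (E : Finset (Sym2 V)) : Set (↥E → ℝ) :=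
  {x | (∀ e, 0 ≤ x e ∧ x e ≤ 1) ∧
       (∀ S : Finset V, S ⊆ VS → S.Nonempty → S ≠ VS → 2 ≤ uCut E x S) ∧
       (∀ v ∈ VS, uCut E x {v} = 2)}

/-- The symmetric path polytope of the undirected graph with node set `VS`, edges `E`,
and endpoints `s`, `t`. -/
def SPpoly (VS : Finset V) (E : Finset (Sym2 V)) (s t : V) : Set (↥E → ℝ) :=
  {x | (∀ e, 0 ≤ x e ∧ x e ≤ 1) ∧
       (∀ S : Finset V, S ⊆ VS → S.Nonempty → S ≠ VS →
          (((s ∈ S) ↔ (t ∈ S)) → 2 ≤ uCut E x S) ∧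
          (¬((s ∈ S) ↔ (t ∈ S)) → 1 ≤ uCut E x S)) ∧
       (∀ v ∈ VS, v ≠ s → v ≠ t → uCut E x {v} = 2) ∧
       uCut E x {s} = 1 ∧ uCut E x {t} = 1}

/-- Indicator vectors of Hamiltonian paths from `s` to `t` (on node set `VS`) among
edges `E`. -/
def uHamPathVecs (VS : Finset V) (E : Finset (Sym2 V)) (s t : V) : Set (↥E → ℝ) :=
  {x | ∃ p : List V, p.Nodup ∧ p.toFinset = VS ∧
        p.head? = some s ∧ p.getLast? = some t ∧
        (∀ e ∈ uSteps p, e ∈ E) ∧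
        ∀ e : ↥E, x e = if e.val ∈ uSteps p then 1 else 0}

/-- Edge set of the complete undirected graph on all of `V` (no self-loops). -/
def uCompleteAll (V : Type*) [Fintype V] [DecidableEq V] : Finset (Sym2 V) :=
  Finset.univ.filter (fun e => ¬ e.IsDiag)

/-- Shortest-path distance (number of edges) between the endpoints of `e`, in the
unweighted undirected graph with edge set `E`. -/
noncomputable def uDist (E : Finset (Sym2 V)) (e : Sym2 V) : ℝ :=
  sInf {c | ∃ u v : V, e = s(u, v) ∧
    ∃ l : List V, IsUWalk E u v l ∧ ((uSteps l).length : ℝ) = c}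

/-! ### Cheung's graphs -/

/-- The node set `V_{ℓ,q}` of Cheung's graph `G_{ℓ,q}`: a top path and a bottom path of
`ℓ+1` nodes each, a left and a right clique of `3q+3` nodes each, and nodes `s`, `t`. -/
inductive ChV (l q : ℕ) where
  | top : Fin (l + 1) → ChV l q
  | bot : Fin (l + 1) → ChV l q
  | left : Fin (3 * q + 3) → ChV l q
  | right : Fin (3 * q + 3) → ChV l q
  | vs : ChV l q
  | vt : ChV l q
deriving DecidableEq, Fintype

/-- The edges of the two paths of `G_{ℓ,q}`. -/
def ChEpaths (l q : ℕ) : Finset (Sym2 (ChV l q)) :=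
  (Finset.univ : Finset (Fin l)).image
    (fun i => s(ChV.top i.castSucc, ChV.top i.succ)) ∪
  (Finset.univ : Finset (Fin l)).image
    (fun i => s(ChV.bot i.castSucc, ChV.bot i.succ))

/-- The edges within the two cliques of `G_{ℓ,q}`. -/
def ChEcliques (l q : ℕ) : Finset (Sym2 (ChV l q)) :=
  ((Finset.univ : Finset (Fin (3 * q + 3) × Fin (3 * q + 3))).filter
      (fun p => p.1 ≠ p.2)).image (fun p => s(ChV.left p.1, ChV.left p.2)) ∪
  ((Finset.univ : Finset (Fin (3 * q + 3) × Fin (3 * q + 3))).filter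
      (fun p => p.1 ≠ p.2)).image (fun p => s(ChV.right p.1, ChV.right p.2))

/-- The connection edges of `G_{ℓ,q}`: path endpoints to the cliques, `s` to the left
clique, and `t` to the right clique. -/
def ChEconn (l q : ℕ) : Finset (Sym2 (ChV l q)) :=
  (Finset.univ : Finset (Fin (3 * q + 3))).image (fun i => s(ChV.top 0, ChV.left i)) ∪
  (Finset.univ : Finset (Fin (3 * q + 3))).image (fun i => s(ChV.bot 0, ChV.left i)) ∪
  (Finset.univ : Finset (Fin (3 * q + 3))).image
    (fun i => s(ChV.top (Fin.last l), ChV.right i)) ∪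
  (Finset.univ : Finset (Fin (3 * q + 3))).image
    (fun i => s(ChV.bot (Fin.last l), ChV.right i)) ∪
  (Finset.univ : Finset (Fin (3 * q + 3))).image (fun i => s(ChV.vs, ChV.left i)) ∪
  (Finset.univ : Finset (Fin (3 * q + 3))).image (fun i => s(ChV.vt, ChV.right i))

/-- The edge set `E_{ℓ,q}` of Cheung's graph `G_{ℓ,q}`. -/
def ChE (l q : ℕ) : Finset (Sym2 (ChV l q)) :=
  ChEpaths l q ∪ ChEcliques l q ∪ ChEconn l q

/-- The node set of `G'_{ℓ,q}`: `G_{ℓ,q}` plus `ℓ-1` new internal path nodes. -/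
inductive ChV' (l q : ℕ) where
  | old : ChV l q → ChV' l q
  | mid : Fin (l - 1) → ChV' l q
deriving DecidableEq, Fintype

/-- The new `s`–`t` path of `G'_{ℓ,q}` (as a list of nodes; it has `ℓ` edges). -/
def ChPathList (l q : ℕ) : List (ChV' l q) :=
  ChV'.old ChV.vs :: ((List.finRange (l - 1)).map ChV'.mid ++ [ChV'.old ChV.vt])

/-- The edge set `E'_{ℓ,q}` of `G'_{ℓ,q}`: the (old) edges of `G_{ℓ,q}` together with the
`ℓ` new edges of a path from `s` to `t` through `ℓ-1` new nodes. -/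
def ChE' (l q : ℕ) : Finset (Sym2 (ChV' l q)) :=
  (ChE l q).image (Sym2.map ChV'.old) ∪ (uSteps (ChPathList l q)).toFinset



open Matrix

-- basic facts
lemma uCrosses_mk (S : Finset V) (a b : V) :
    uCrosses S s(a, b) = xor (decide (a ∈ S)) (decide (b ∈ S)) := rfl

lemma uSteps_cons_cons (a b : V) (t : List V) :
    uSteps (a :: b :: t) = s(a, b) :: uSteps (b :: t) := rfl

lemma mem_of_mem_uSteps {p : List V} {e : Sym2 V} (he : e ∈ uSteps p) :
    ∃ u v, e = s(u, v) ∧ u ∈ p ∧ v ∈ p := by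
  obtain ⟨⟨u, v⟩, hz, rfl⟩ := List.mem_map.mp he
  exact ⟨u, v, rfl, (List.of_mem_zip hz).1, List.mem_of_mem_tail (List.of_mem_zip hz).2⟩

lemma filter_crosses_const (S' : Finset V) (b : Bool) (p : List V)
    (h : ∀ v ∈ p, decide (v ∈ S') = b) :
    (uSteps p).toFinset.filter (fun e => uCrosses S' e) = ∅ := by
  rw [Finset.filter_eq_empty_iff]
  intro e he
  rw [List.mem_toFinset] at he
  obtain ⟨u, v, rfl, hu, hv⟩ := mem_of_mem_uSteps he
  simp [uCrosses_mk, h u hu, h v hv]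

lemma crossSum_one (S' : Finset V) (b : Bool) :
    ∀ (u : List V) (w : List V), u ≠ [] → w ≠ [] →
      (∀ v ∈ u, decide (v ∈ S') = b) → (∀ v ∈ w, decide (v ∈ S') = !b) →
      ∑ e ∈ (uSteps (u ++ w)).toFinset.filter (fun e => uCrosses S' e), (1:ℝ) = 1
  | [], _, hu, _, _, _ => absurd rfl hu
  | [a], w, _, hw, hu, hw' => by
      obtain ⟨c, w', rfl⟩ := List.exists_cons_of_ne_nil hw
      have hstep : uSteps ([a] ++ (c :: w')) = s(a, c) :: uSteps (c :: w') := rfl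
      rw [hstep, List.toFinset_cons, Finset.filter_insert]
      have hcr : uCrosses S' s(a, c) = true := by
        simp [uCrosses_mk, hu a (by simp), hw' c (by simp)]
      rw [if_pos hcr, filter_crosses_const S' (!b) _ (fun v hv => hw' v hv)]
      simp
  | a :: a2 :: u', w, _, hw, hu, hw' => by
      have hstep : uSteps ((a :: a2 :: u') ++ w) = s(a, a2) :: uSteps ((a2 :: u') ++ w) := rfl
      rw [hstep, List.toFinset_cons, Finset.filter_insert]
      have hcr : uCrosses S' s(a, a2) = false := by
        simp [uCrosses_mk, hu a (by simp), hu a2 (by simp)]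
      rw [if_neg (by simp [hcr])]
      exact crossSum_one S' b (a2 :: u') w (by simp) hw
        (fun v hv => hu v (List.mem_cons_of_mem a hv)) hw'

lemma uCrosses_compl [Fintype V] (S : Finset V) (e : Sym2 V) :
    uCrosses (Finset.univ \ S) e = uCrosses S e := by
  induction e using Sym2.ind with
  | _ a b =>
    simp only [uCrosses_mk]
    have h1 : decide (a ∈ Finset.univ \ S) = !decide (a ∈ S) := by simp
    have h2 : decide (b ∈ Finset.univ \ S) = !decide (b ∈ S) := by simp
    rw [h1, h2]
    cases decide (a ∈ S) <;> cases decide (b ∈ S) <;> rfl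

lemma uCut_compl [Fintype V] (E : Finset (Sym2 V)) (x : ↥E → ℝ) (S : Finset V) :
    uCut E x (Finset.univ \ S) = uCut E x S := by
  unfold uCut
  congr 1
  apply Finset.filter_congr
  intro e _
  rw [uCrosses_compl]


lemma face_col {ι : Type*} [Fintype ι] [DecidableEq ι] {X : Matrix (Option ι) (Option ι) ℝ}
    (hX : X.PosSemidef) (hsym : ∀ i j, X i j = X j i) (h00 : X none none = 1) {f : ι}
    (h0f : X none (some f) = 1) (hff : X (some f) (some f) = 1) :
    ∀ i, X i (some f) = X i none := by
  set v : Option ι → ℝ := fun j => if j = none then 1 else if j = some f then -1 else 0 with hv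
  have hmv : ∀ i, (X *ᵥ v) i = X i none - X i (some f) := by
    intro i
    simp only [Matrix.mulVec, dotProduct, hv]
    rw [Fintype.sum_option]
    simp only [mul_ite, mul_one, mul_neg, mul_zero, reduceIte, Option.some.injEq,
      reduceCtorEq, if_false]
    rw [Finset.sum_ite_eq' Finset.univ f (fun j => -X i (some j))]
    simp [sub_eq_add_neg]
  have hdp : star v ⬝ᵥ (X *ᵥ v) = 0 := by
    simp only [dotProduct, Pi.star_apply, star_trivial]
    rw [Fintype.sum_option]
    simp only [hmv]
    simp only [hv, reduceIte, Option.some.injEq, one_mul]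
    rw [show (∑ j : ι, (if (some j : Option ι) = none then (1:ℝ)
          else if j = f then -1 else 0) *
          (X (some j) none - X (some j) (some f)))
        = ∑ j : ι, (if j = f then -(X (some j) none - X (some j) (some f)) else 0) from
      Finset.sum_congr rfl (by intro j _; by_cases h : j = f <;> simp [h])]
    rw [Finset.sum_ite_eq' Finset.univ f (fun j => -(X (some j) none - X (some j) (some f)))]
    have h1 : X (some f) none = 1 := (hsym (some f) none).trans h0f
    simp [h00, h0f, h1, hff]
  have hz := (hX.dotProduct_mulVec_zero_iff v).mp hdp
  intro i
  have h2 := congrFun hz i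
  rw [hmv i] at h2
  simp only [Pi.zero_apply] at h2
  linarith


lemma lsNplus_project {ι ι' : Type*} [Fintype ι] [DecidableEq ι] [Fintype ι'] [DecidableEq ι']
    (emb : ι → ι') (R : Set (ι → ℝ)) (R' : Set (ι' → ℝ)) (New : ι' → Prop)
    (hIH : ∀ y ∈ R', (∀ f', New f' → y f' = 1) → (fun j => y (emb j)) ∈ R)
    (x' : ι' → ℝ) (hx' : x' ∈ lsNplus R') (hnew : ∀ f', New f' → x' f' = 1) :
    (fun j => x' (emb j)) ∈ lsNplus R := by
  obtain ⟨X, hpsd, hsym, h00, h0i, hdiag, hrow, hdiff⟩ := hx'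
  dsimp only at hsym h00 h0i hdiag
  have hface : ∀ f', New f' → ∀ i, X i (some f') = X i none := fun f' hf' =>
    face_col hpsd hsym h00 (by rw [h0i]; exact hnew f' hf')
      (by rw [hdiag]; exact hnew f' hf')
  refine ⟨X.submatrix (Option.map emb) (Option.map emb), hpsd.submatrix _,
    fun i j => hsym _ _, h00, fun i => h0i (emb i), fun i => hdiag (emb i), ?_, ?_⟩
  · intro e
    obtain ⟨c, y, hyR', hc0, hc1, hc2⟩ := hrow (emb e)
    dsimp only at hc1 hc2
    rcases eq_or_lt_of_le hc0 with h0 | hpos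
    · -- c = 0 : the row is zero; witness via x' ∈ R'
      obtain ⟨c₂, y₂, hy₂, hc₂0, hd1, hd2⟩ := hdiff (emb e)
      dsimp only at hd1 hd2
      have hc₂1 : c₂ = 1 := by rw [← hd1, h00, hc1, ← h0, sub_zero]
      have hy₂x : y₂ = x' := by
        funext j
        have h1 := congrFun hd2 j
        rw [h0i j, congrFun hc2 j, ← h0, zero_mul, sub_zero, hc₂1, one_mul] at h1
        exact h1.symm
      have hxR : (fun j => x' (emb j)) ∈ R := hIH x' (hy₂x ▸ hy₂) hnew
      refine ⟨0, fun j => x' (emb j), hxR, le_refl 0, ?_, ?_⟩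
      · dsimp only
        simpa using (hc1.trans h0.symm)
      · funext j
        dsimp only [Matrix.submatrix_apply, Option.map_some, Option.map_none]
        rw [congrFun hc2 (emb j), ← h0, zero_mul, zero_mul]
    · have hynew : ∀ f', New f' → y f' = 1 := by
        intro f' hf'
        have h1 : X (some (emb e)) (some f') = X (some (emb e)) none := hface f' hf' _
        have h2 : c * y f' = c * 1 := by
          rw [mul_one, ← congrFun hc2 f', h1, hc1]
        exact mul_left_cancel₀ (ne_of_gt hpos) h2
      exact ⟨c, fun j => y (emb j), hIH y hyR' hynew, hc0, hc1,
        funext fun j => congrFun hc2 (emb j)⟩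
  · intro e
    obtain ⟨c₂, y₂, hy₂, hc₂0, hd1, hd2⟩ := hdiff (emb e)
    dsimp only at hd1 hd2
    rcases eq_or_lt_of_le hc₂0 with h0 | hpos
    · -- c₂ = 0
      obtain ⟨c, y, hyR', hc0, hc1, hc2⟩ := hrow (emb e)
      dsimp only at hc1 hc2
      have hXe : X (some (emb e)) none = 1 := by
        have := hd1
        rw [h00, ← h0] at this
        linarith
      have hc1' : c = 1 := by rw [← hc1]; exact hXe
      have hynew : ∀ f', New f' → y f' = 1 := by
        intro f' hf'
        have h1 : c * y f' = c * 1 := by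
          rw [mul_one, ← congrFun hc2 f', hface f' hf', hXe, hc1']
        exact mul_left_cancel₀ (by rw [hc1']; norm_num) h1
      refine ⟨0, fun j => y (emb j), hIH y hyR' hynew, le_refl 0, ?_, ?_⟩
      · dsimp only
        simpa using (hd1.trans h0.symm)
      · funext j
        dsimp only [Matrix.submatrix_apply, Option.map_some, Option.map_none]
        rw [show X none (some (emb j)) - X (some (emb e)) (some (emb j)) =
          c₂ * y₂ (emb j) from congrFun hd2 (emb j), ← h0, zero_mul, zero_mul]
    · have hy₂new : ∀ f', New f' → y₂ f' = 1 := by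
        intro f' hf'
        have h1 : c₂ * y₂ f' = c₂ * 1 := by
          rw [mul_one, ← congrFun hd2 f', hface f' hf' none, hface f' hf' (some (emb e))]
          exact hd1
        exact mul_left_cancel₀ (ne_of_gt hpos) h1
      exact ⟨c₂, fun j => y₂ (emb j), hIH y₂ hy₂ hy₂new, hc₂0, hd1,
        funext fun j => congrFun hd2 (emb j)⟩


/-! structural lemmas -/

lemma old_inj {l q : ℕ} : Function.Injective (ChV'.old (l := l) (q := q)) :=
  fun a b h => by injection h

lemma symMap_old_inj {l q : ℕ} :
    Function.Injective (Sym2.map (ChV'.old (l := l) (q := q))) :=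
  Sym2.map.injective old_inj

lemma svt_not_mem (l q : ℕ) : s(ChV.vs, ChV.vt) ∉ ChE l q := by
  intro h
  simp only [ChE, ChEpaths, ChEcliques, ChEconn, Finset.mem_union] at h
  rcases h with ((h | h) | (h | h)) | (((((h | h) | h) | h) | h) | h) <;>
    · obtain ⟨i, -, hi⟩ := Finset.mem_image.mp h
      simp [Sym2.eq_iff] at hi

lemma steps_mid_aux {l q : ℕ} (z : ChV' l q) :
    ∀ (L : List (Fin (l - 1))) (a : ChV' l q), ∀ e ∈ uSteps (a :: (L.map ChV'.mid ++ [z])),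
      (∃ i, ChV'.mid i ∈ e) ∨ e = s(a, z)
  | [], a, e, he => by
      simp only [List.map_nil, List.nil_append] at he
      right
      rw [show uSteps [a, z] = [s(a, z)] from rfl, List.mem_singleton] at he
      exact he
  | i :: L, a, e, he => by
      rw [show (a :: ((i :: L).map ChV'.mid ++ [z]))
            = a :: ChV'.mid i :: (L.map ChV'.mid ++ [z]) from rfl,
          uSteps_cons_cons] at he
      rcases List.mem_cons.mp he with h | h
      · exact Or.inl ⟨i, by rw [h]; simp⟩
      · rcases steps_mid_aux z L (ChV'.mid i) e h with h' | h'
        · exact Or.inl h'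
        · exact Or.inl ⟨i, by rw [h']; simp⟩

lemma new_edge_char {l q : ℕ} {e : Sym2 (ChV' l q)} (he : e ∈ uSteps (ChPathList l q)) :
    (∃ i, ChV'.mid i ∈ e) ∨ e = s(ChV'.old ChV.vs, ChV'.old ChV.vt) := by
  have := steps_mid_aux (ChV'.old ChV.vt) (List.finRange (l - 1)) (ChV'.old ChV.vs) e he
  exact this

lemma disj_new_old (l q : ℕ) :
    Disjoint ((ChE l q).image (Sym2.map ChV'.old)) (uSteps (ChPathList l q)).toFinset := by
  rw [Finset.disjoint_left]
  rintro e he he'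
  obtain ⟨f, hf, rfl⟩ := Finset.mem_image.mp he
  rw [List.mem_toFinset] at he'
  rcases new_edge_char he' with ⟨i, hi⟩ | h
  · obtain ⟨a, _, hai⟩ := Sym2.mem_map.mp hi
    exact absurd hai (by simp)
  · have hfe : f = s(ChV.vs, ChV.vt) := symMap_old_inj (by rw [h]; rfl)
    exact svt_not_mem l q (hfe ▸ hf)

def ChEmb (l q : ℕ) (e : ↥(ChE l q)) : ↥(ChE' l q) :=
  ⟨Sym2.map ChV'.old e.val, by
    simp only [ChE', Finset.mem_union]
    exact Or.inl (Finset.mem_image_of_mem _ e.2)⟩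

lemma uCrosses_map_old {l q : ℕ} {S : Finset (ChV l q)} {S' : Finset (ChV' l q)}
    (hS : ∀ u, ChV'.old u ∈ S' ↔ u ∈ S) (e : Sym2 (ChV l q)) :
    uCrosses S' (Sym2.map ChV'.old e) = uCrosses S e := by
  induction e using Sym2.ind with
  | _ a b =>
    rw [Sym2.map_pair_eq, uCrosses_mk, uCrosses_mk,
      decide_eq_decide.mpr (hS a), decide_eq_decide.mpr (hS b)]

set_option maxHeartbeats 1000000 in
lemma cut_split (l q : ℕ) (x' : ↥(ChE' l q) → ℝ)
    (hnew : ∀ e' : ↥(ChE' l q),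
      e'.val ∉ (ChE l q).image (Sym2.map ChV'.old) → x' e' = 1)
    (S : Finset (ChV l q)) (S' : Finset (ChV' l q))
    (hS : ∀ u, ChV'.old u ∈ S' ↔ u ∈ S) :
    uCut (ChE' l q) x' S' =
      uCut (ChE l q) (fun e => x' (ChEmb l q e)) S +
      ∑ e ∈ (uSteps (ChPathList l q)).toFinset.filter (fun e => uCrosses S' e), (1:ℝ) := by
  classical
  set F : Sym2 (ChV' l q) → ℝ := fun e =>
    if h : e ∈ ChE' l q then (if uCrosses S' e then x' ⟨e, h⟩ else 0) else 0 with hF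
  have h1 : uCut (ChE' l q) x' S' = ∑ e ∈ ChE' l q, F e := by
    rw [uCut, Finset.sum_filter, ← Finset.sum_attach (ChE' l q) F]
    apply Finset.sum_congr rfl
    intro e _
    rw [hF]
    dsimp only
    rw [dif_pos e.2]
  have hsplit : ChE' l q
      = ((ChE l q).image (Sym2.map ChV'.old)) ∪ (uSteps (ChPathList l q)).toFinset := rfl
  rw [h1, hsplit, Finset.sum_union (disj_new_old l q)]
  congr 1
  · rw [Finset.sum_image (fun a _ b _ h => symMap_old_inj h)]
    rw [uCut, Finset.sum_filter, ← Finset.sum_attach (ChE l q)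
      (fun e => F (Sym2.map ChV'.old e))]
    apply Finset.sum_congr rfl
    intro e _
    show F (Sym2.map ChV'.old e.val) = _
    rw [hF]
    dsimp only
    rw [dif_pos (show Sym2.map ChV'.old e.val ∈ ChE' l q from (ChEmb l q e).2),
      uCrosses_map_old hS e.val]
    rfl
  · rw [Finset.sum_filter]
    apply Finset.sum_congr rfl
    intro e he
    have hmem : e ∈ ChE' l q := Finset.mem_union_right _ he
    have hnotim : e ∉ (ChE l q).image (Sym2.map ChV'.old) :=
      fun h => (Finset.disjoint_left.mp (disj_new_old l q)) h he
    rw [hF]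
    dsimp only
    rw [dif_pos hmem, hnew ⟨e, hmem⟩ hnotim]

lemma mem_pathList {l q : ℕ} {v : ChV' l q} (hv : v ∈ ChPathList l q) :
    v = ChV'.old ChV.vs ∨ v = ChV'.old ChV.vt ∨ ∃ i, v = ChV'.mid i := by
  simp only [ChPathList, List.mem_cons, List.mem_append, List.mem_map,
    List.mem_singleton] at hv
  rcases hv with h | h | h
  · exact Or.inl h
  · obtain ⟨i, _, hi⟩ := h
    exact Or.inr (Or.inr ⟨i, hi.symm⟩)
  · rcases h with h | h
    · exact Or.inr (Or.inl h)
    · simp at h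


lemma mid_not_mem_image {l q : ℕ} (T : Finset (ChV l q)) (i : Fin (l - 1)) :
    ChV'.mid i ∉ T.image ChV'.old := by
  simp [Finset.mem_image]

lemma old_mem_image {l q : ℕ} (T : Finset (ChV l q)) (u : ChV l q) :
    ChV'.old u ∈ T.image ChV'.old ↔ u ∈ T :=
  ⟨fun h => by
    obtain ⟨v, hv, hveq⟩ := Finset.mem_image.mp h
    exact (old_inj hveq) ▸ hv,
   fun h => Finset.mem_image_of_mem _ h⟩

lemma crossB_zero {l q : ℕ} (T : Finset (ChV l q)) (hvs : ChV.vs ∉ T) (hvt : ChV.vt ∉ T) :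
    ∑ e ∈ (uSteps (ChPathList l q)).toFinset.filter
      (fun e => uCrosses (T.image ChV'.old) e), (1:ℝ) = 0 := by
  rw [filter_crosses_const _ false _ ?h, Finset.sum_empty]
  case h =>
    intro v hv
    rcases mem_pathList hv with rfl | rfl | ⟨i, rfl⟩
    · simp [old_mem_image, hvs]
    · simp [old_mem_image, hvt]
    · simp [mid_not_mem_image]

lemma crossB_one {l q : ℕ} (T : Finset (ChV l q)) (hvs : ChV.vs ∈ T) (hvt : ChV.vt ∉ T) :
    ∑ e ∈ (uSteps (ChPathList l q)).toFinset.filter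
      (fun e => uCrosses (T.image ChV'.old) e), (1:ℝ) = 1 := by
  have h := crossSum_one (T.image ChV'.old) true [ChV'.old ChV.vs]
    ((List.finRange (l - 1)).map ChV'.mid ++ [ChV'.old ChV.vt])
    (by simp) (by simp) ?hu ?hw
  · exact h
  case hu =>
    intro v hv
    rw [List.mem_singleton] at hv
    subst hv
    simp [old_mem_image, hvs]
  case hw =>
    intro v hv
    rcases List.mem_append.mp hv with hv | hv
    · obtain ⟨i, _, rfl⟩ := List.mem_map.mp hv
      simp [mid_not_mem_image]
    · rw [List.mem_singleton] at hv
      subst hv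
      simp [old_mem_image, hvt]

lemma crossB_one_t (l q : ℕ) :
    ∑ e ∈ (uSteps (ChPathList l q)).toFinset.filter
      (fun e => uCrosses (Finset.univ \ {ChV'.old ChV.vt}) e), (1:ℝ) = 1 := by
  have h := crossSum_one (Finset.univ \ {ChV'.old (l := l) (q := q) ChV.vt}) true
    (ChV'.old ChV.vs :: (List.finRange (l - 1)).map ChV'.mid) [ChV'.old ChV.vt]
    (by simp) (by simp) ?hu ?hw
  · exact h
  case hu =>
    intro v hv
    rcases List.mem_cons.mp hv with rfl | hv
    · simp
    · obtain ⟨i, _, rfl⟩ := List.mem_map.mp hv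
      simp
  case hw =>
    intro v hv
    rw [List.mem_singleton] at hv
    subst hv
    simp

lemma base (l q : ℕ) (x' : ↥(ChE' l q) → ℝ)
    (hnew : ∀ e' : ↥(ChE' l q),
      e'.val ∉ (ChE l q).image (Sym2.map ChV'.old) → x' e' = 1)
    (hx' : x' ∈ STpoly Finset.univ (ChE' l q)) :
    (fun e => x' (ChEmb l q e)) ∈ SPpoly Finset.univ (ChE l q) ChV.vs ChV.vt := by
  obtain ⟨hbound, hcuts, hdeg⟩ := hx'
  have imNe_vs : ∀ T : Finset (ChV l q), ChV.vs ∉ T → T.image ChV'.old ≠ Finset.univ :=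
    fun T h heq => h ((old_mem_image T ChV.vs).mp (heq ▸ Finset.mem_univ _))
  have imNe_vt : ∀ T : Finset (ChV l q), ChV.vt ∉ T → T.image ChV'.old ≠ Finset.univ :=
    fun T h heq => h ((old_mem_image T ChV.vt).mp (heq ▸ Finset.mem_univ _))
  have main2 : ∀ T : Finset (ChV l q), T.Nonempty → ChV.vs ∉ T → ChV.vt ∉ T →
      2 ≤ uCut (ChE l q) (fun e => x' (ChEmb l q e)) T := by
    intro T hne hvs hvt
    have h := hcuts (T.image ChV'.old) (Finset.subset_univ _) (hne.image _) (imNe_vs T hvs)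
    rwa [cut_split l q x' hnew T _ (old_mem_image T), crossB_zero T hvs hvt, add_zero] at h
  have main1 : ∀ T : Finset (ChV l q), ChV.vs ∈ T → ChV.vt ∉ T →
      1 ≤ uCut (ChE l q) (fun e => x' (ChEmb l q e)) T := by
    intro T hvs hvt
    have h := hcuts (T.image ChV'.old) (Finset.subset_univ _)
      ⟨_, Finset.mem_image_of_mem _ hvs⟩ (imNe_vt T hvt)
    rw [cut_split l q x' hnew T _ (old_mem_image T), crossB_one T hvs hvt] at h
    linarith
  refine ⟨fun e => hbound (ChEmb l q e), ?_, ?_, ?_, ?_⟩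
  · intro S _ hne hneuniv
    constructor
    · intro hiff
      by_cases hvs : ChV.vs ∈ S
      · have hvt := hiff.mp hvs
        have hne' : (Finset.univ \ S).Nonempty := by
          obtain ⟨v, hv⟩ : ∃ v, v ∉ S := by
            by_contra hc
            push_neg at hc
            exact hneuniv (Finset.eq_univ_iff_forall.mpr hc)
          exact ⟨v, Finset.mem_sdiff.mpr ⟨Finset.mem_univ _, hv⟩⟩
        have h := main2 (Finset.univ \ S) hne' (by simp [hvs]) (by simp [hvt])
        rwa [uCut_compl] at h
      · have hvt : ChV.vt ∉ S := fun h => hvs (hiff.mpr h)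
        exact main2 S hne hvs hvt
    · intro hxor
      by_cases hvs : ChV.vs ∈ S
      · have hvt : ChV.vt ∉ S := fun h => hxor ⟨fun _ => h, fun _ => hvs⟩
        exact main1 S hvs hvt
      · have hvt : ChV.vt ∈ S := by
          by_contra h
          exact hxor ⟨fun h' => absurd h' hvs, fun h' => absurd h' h⟩
        have h := main1 (Finset.univ \ S) (by simp [hvs]) (by simp [hvt])
        rwa [uCut_compl] at h
  · intro v _ hvs hvt
    have hd := hdeg (ChV'.old v) (Finset.mem_univ _)
    rw [show ({ChV'.old v} : Finset (ChV' l q)) = ({v} : Finset (ChV l q)).image ChV'.old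
        from (Finset.image_singleton _ _).symm,
      cut_split l q x' hnew {v} _ (old_mem_image {v}),
      crossB_zero {v} (by simp; exact fun h => hvs h.symm)
        (by simp; exact fun h => hvt h.symm), add_zero] at hd
    exact hd
  · have hd := hdeg (ChV'.old ChV.vs) (Finset.mem_univ _)
    rw [show ({ChV'.old ChV.vs} : Finset (ChV' l q))
          = ({ChV.vs} : Finset (ChV l q)).image ChV'.old
        from (Finset.image_singleton _ _).symm,
      cut_split l q x' hnew {ChV.vs} _ (old_mem_image _),
      crossB_one {ChV.vs} (Finset.mem_singleton_self _) (by simp)] at hd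
    linarith
  · have hd := hdeg (ChV'.old ChV.vt) (Finset.mem_univ _)
    rw [← uCut_compl] at hd
    rw [cut_split l q x' hnew (Finset.univ \ {ChV.vt}) (Finset.univ \ {ChV'.old ChV.vt})
        (by intro u; simp), crossB_one_t l q] at hd
    have h2 : uCut (ChE l q) (fun e => x' (ChEmb l q e)) (Finset.univ \ {ChV.vt}) = 1 := by
      linarith
    rw [← uCut_compl (ChE l q) _ {ChV.vt}]
    exact h2



lemma chKey (l q : ℕ) : ∀ r : ℕ, ∀ x' : ↥(ChE' l q) → ℝ,
    (∀ e' : ↥(ChE' l q), e'.val ∉ (ChE l q).image (Sym2.map ChV'.old) → x' e' = 1) →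
    x' ∈ lsNplus^[r] (STpoly Finset.univ (ChE' l q)) →
    (fun e => x' (ChEmb l q e)) ∈ lsNplus^[r] (SPpoly Finset.univ (ChE l q) ChV.vs ChV.vt)
  | 0, x', hnew, hx' => base l q x' hnew hx'
  | r + 1, x', hnew, hx' => by
      rw [Function.iterate_succ_apply'] at hx' ⊢
      exact lsNplus_project (ChEmb l q) _ _
        (fun e' => e'.val ∉ (ChE l q).image (Sym2.map ChV'.old))
        (fun y hy hynew => chKey l q r y hynew hy) x' hx' hnew


theorem stmt12 (r l q : ℕ) (hl : 1 ≤ l)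
    (x : ↥(ChE l q) → ℝ) (x' : ↥(ChE' l q) → ℝ)
    (hagree : ∀ (e : ↥(ChE l q)) (e' : ↥(ChE' l q)),
      e'.val = Sym2.map ChV'.old e.val → x' e' = x e)
    (hnew : ∀ e' : ↥(ChE' l q),
      e'.val ∉ (ChE l q).image (Sym2.map ChV'.old) → x' e' = 1)
    (hx' : x' ∈ lsNplus^[r] (STpoly Finset.univ (ChE' l q))) :
    x ∈ lsNplus^[r] (SPpoly Finset.univ (ChE l q) ChV.vs ChV.vt) := by
  have hx : x = fun e => x' (ChEmb l q e) :=
    funext fun e => (hagree e (ChEmb l q e) rfl).symm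
  rw [hx]
  exact chKey l q r x' hnew hx' 

end TSPGap
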